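/- Let K be a division ring, S an endomorphism, D an S-derivation, and a ∈ K. The (S,D)-centralizer C(a) := {x ∈ K \ {0} : S(x)a x⁻¹ + D(x)x⁻¹ = a} ∪ {0} is a subdivision ring of K (it is closed under addition, multiplication, and inverses of nonzero elements, and contains 1). -/

import Mathlib

/-- The `(S,D)`-centralizer of `a`:
`C(a) = {x ≠ 0 : S(x)a x⁻¹ + D(x)x⁻¹ = a} ∪ {0}`. -/
def sdCentralizer {K : Type*} [DivisionRing K] (S : K →+* K) (D : K →+ K) (a : K) : Set K :=
  {x | x = 0 ∨ S x * a * x⁻¹ + D x * x⁻¹ = a}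

lemma sdCentralizer_mem_iff {K : Type*} [DivisionRing K] (S : K →+* K) (D : K →+ K)
    (a x : K) : x ∈ sdCentralizer S D a ↔ S x * a + D x = a * x := by
  rcases eq_or_ne x 0 with rfl | hx
  · simp [sdCentralizer]
  · constructor
    · rintro (rfl | h)
      · exact absurd rfl hx
      · have := congrArg (· * x) h
        simpa [add_mul, mul_assoc, inv_mul_cancel₀ hx] using this
    · intro h
      right
      have := congrArg (· * x⁻¹) h
      simpa [add_mul, mul_assoc, mul_inv_cancel₀ hx] using this

/-- The `(S,D)`-centralizer of `a` is a subdivision ring of `K`: it contains `1` and is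
closed under addition, multiplication and inverses. -/
theorem sdCentralizer_subdivisionRing {K : Type*} [DivisionRing K]
    (S : K →+* K) (D : K →+ K)
    (hD : ∀ a b : K, D (a * b) = S a * D b + D a * b) (a : K) :
    (1 : K) ∈ sdCentralizer S D a ∧
    (∀ x ∈ sdCentralizer S D a, ∀ y ∈ sdCentralizer S D a, x + y ∈ sdCentralizer S D a) ∧
    (∀ x ∈ sdCentralizer S D a, ∀ y ∈ sdCentralizer S D a, x * y ∈ sdCentralizer S D a) ∧
    (∀ x ∈ sdCentralizer S D a, x⁻¹ ∈ sdCentralizer S D a) := by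
  have hD1 : D 1 = 0 := by
    have h := hD 1 1
    simp only [mul_one, one_mul, map_one] at h
    exact (right_eq_add.mp h)
  simp only [sdCentralizer_mem_iff]
  refine ⟨by simp [hD1], ?_, ?_, ?_⟩
  · intro x hx y hy
    simp only [map_add]
    rw [add_mul, mul_add, ← hx, ← hy]
    abel
  · intro x hx y hy
    rw [map_mul, hD x y, mul_assoc]
    calc S x * (S y * a) + (S x * D y + D x * y)
        = S x * (S y * a + D y) + D x * y := by noncomm_ring
      _ = S x * (a * y) + D x * y := by rw [hy]
      _ = (S x * a + D x) * y := by noncomm_ring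
      _ = a * (x * y) := by rw [hx]; noncomm_ring
  · intro x hx
    rcases eq_or_ne x 0 with rfl | hxn
    · simp
    · have hinv : S x⁻¹ * S x = 1 := by rw [← map_mul, inv_mul_cancel₀ hxn, map_one]
      have h0 : S x⁻¹ * D x + D x⁻¹ * x = 0 := by
        rw [← hD x⁻¹ x, inv_mul_cancel₀ hxn, hD1]
      have hDinv : D x⁻¹ = -(S x⁻¹ * (D x * x⁻¹)) := by
        have h1 := congrArg (· * x⁻¹) h0
        simp only [add_mul, mul_assoc, mul_inv_cancel₀ hxn, mul_one, zero_mul] at h1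
        exact eq_neg_of_add_eq_zero_right h1
      have key : S x * (a * x⁻¹) = a - D x * x⁻¹ := by
        have h2 := congrArg (· * x⁻¹) hx
        simp only [add_mul, mul_assoc, mul_inv_cancel₀ hxn, mul_one] at h2
        rw [eq_sub_iff_add_eq]; exact h2
      calc S x⁻¹ * a + D x⁻¹
          = S x⁻¹ * (a - D x * x⁻¹) := by rw [hDinv]; noncomm_ring
        _ = S x⁻¹ * (S x * (a * x⁻¹)) := by rw [key]
        _ = (S x⁻¹ * S x) * (a * x⁻¹) := by rw [mul_assoc]
        _ = a * x⁻¹ := by rw [hinv, one_mul]
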